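/- Let M_k(x)=Σ_{n≥0}(e_k(n)−o_k(n))xⁿ where e_k(n), o_k(n) count even and odd 132-avoiding permutations of length n avoiding the increasing pattern 12⋯k. Then for all k≥1, M_{2k−1}(x)=1+x·R_{k−1}(x²) and M_{2k}(x)=(1+x·R_k(x²))·R_k(x²)/(1+x²·R_k(x²)²), where R_m(x) is defined by R_0(x)=0 (so R_0 terms vanish) and R_m(x)=1/(1−x·R_{m−1}(x)). -/

import Mathlib

/-- `π` contains the pattern `τ`: there is a strictly increasing choice of positions
on which `π` is order-isomorphic to `τ`. -/
def HasPatt {n k : ℕ} (π : Equiv.Perm (Fin n)) (τ : Equiv.Perm (Fin k)) : Prop :=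
  ∃ f : Fin k → Fin n, StrictMono f ∧ ∀ i j : Fin k, τ i < τ j ↔ π (f i) < π (f j)

/-- The pattern `132` as a permutation of `Fin 3` (0-indexed values `0, 2, 1`). -/
def patt132 : Equiv.Perm (Fin 3) := Equiv.swap 1 2

/-- The number of even (sign `+1`) permutations of length `n` avoiding both the
pattern `132` and the pattern `τ`. -/
noncomputable def EvenAvoid {k : ℕ} (τ : Equiv.Perm (Fin k)) (n : ℕ) : ℕ :=
  Nat.card {π : Equiv.Perm (Fin n) //
    Equiv.Perm.sign π = 1 ∧ ¬ HasPatt π patt132 ∧ ¬ HasPatt π τ}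

/-- The number of odd (sign `−1`) permutations of length `n` avoiding both the
pattern `132` and the pattern `τ`. -/
noncomputable def OddAvoid {k : ℕ} (τ : Equiv.Perm (Fin k)) (n : ℕ) : ℕ :=
  Nat.card {π : Equiv.Perm (Fin n) //
    Equiv.Perm.sign π = -1 ∧ ¬ HasPatt π patt132 ∧ ¬ HasPatt π τ}

open PowerSeries

/-- The power series `R_m`: `R_0 = 0`, `R_m = 1/(1 − X·R_{m−1})`. -/
noncomputable def Rps : ℕ → PowerSeries ℚ
  | 0 => 0
  | (m + 1) => (1 - PowerSeries.X * Rps m)⁻¹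

/-- Substitution of `x²` for `x` in a power series. -/
noncomputable def sub2 (f : PowerSeries ℚ) : PowerSeries ℚ :=
  PowerSeries.mk fun n => if 2 ∣ n then PowerSeries.coeff (R := ℚ) (n / 2) f else 0

/-- `M_k(x) = Σ (e_k(n) − o_k(n)) xⁿ`, where `e_k(n)` and `o_k(n)` count even and odd
`132`-avoiding permutations of length `n` avoiding the increasing pattern `12⋯k`. -/
noncomputable def Mgf (k : ℕ) : PowerSeries ℚ :=
  PowerSeries.mk fun n =>
    (EvenAvoid (1 : Equiv.Perm (Fin k)) n : ℚ) - (OddAvoid (1 : Equiv.Perm (Fin k)) n : ℚ)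

/-! ### Counting layer -/

open Equiv Finset

open scoped Classical in
noncomputable def AvSet (K n : ℕ) : Finset (Equiv.Perm (Fin n)) :=
  Finset.univ.filter (fun π => ¬ HasPatt π patt132 ∧ ¬ HasPatt π (1 : Equiv.Perm (Fin K)))

noncomputable def sgn {n : ℕ} (π : Equiv.Perm (Fin n)) : ℚ := ((Equiv.Perm.sign π : ℤ) : ℚ)

noncomputable def g (K n : ℕ) : ℚ := ∑ π ∈ AvSet K n, sgn π

theorem g_eq (K n : ℕ) :
    g K n = (EvenAvoid (1 : Equiv.Perm (Fin K)) n : ℚ) - (OddAvoid (1 : Equiv.Perm (Fin K)) n : ℚ) := by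
  classical
  have hE : EvenAvoid (1 : Equiv.Perm (Fin K)) n
      = ((AvSet K n).filter (fun π => Equiv.Perm.sign π = 1)).card := by
    rw [EvenAvoid, Nat.card_eq_fintype_card, Fintype.card_subtype, AvSet]
    congr 1
    ext π
    simp [Finset.mem_filter]
    tauto
  have hO : OddAvoid (1 : Equiv.Perm (Fin K)) n
      = ((AvSet K n).filter (fun π => ¬ Equiv.Perm.sign π = 1)).card := by
    rw [OddAvoid, Nat.card_eq_fintype_card, Fintype.card_subtype, AvSet]
    congr 1
    ext π
    rcases Int.units_eq_one_or (Equiv.Perm.sign π) with h | h <;>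
      simp [Finset.mem_filter, h]
  rw [hE, hO, g, ← Finset.sum_filter_add_sum_filter_not (AvSet K n)
    (fun π => Equiv.Perm.sign π = 1)]
  have h1 : ∀ π ∈ (AvSet K n).filter (fun π => Equiv.Perm.sign π = 1), sgn π = 1 := by
    intro π hπ
    simp only [Finset.mem_filter] at hπ
    simp [sgn, hπ.2]
  have h2 : ∀ π ∈ (AvSet K n).filter (fun π => ¬ Equiv.Perm.sign π = 1), sgn π = -1 := by
    intro π hπ
    simp only [Finset.mem_filter] at hπ
    rcases Int.units_eq_one_or (Equiv.Perm.sign π) with h | h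
    · exact absurd h hπ.2
    · simp [sgn, h]
  rw [Finset.sum_congr rfl h1, Finset.sum_congr rfl h2]
  simp
  ring

theorem g_zero (K : ℕ) (hK : 1 ≤ K) : g K 0 = 1 := by
  classical
  have h : AvSet K 0 = {1} := by
    ext π
    simp only [AvSet, Finset.mem_filter, Finset.mem_univ, true_and, Finset.mem_singleton]
    constructor
    · intro _; exact Subsingleton.elim _ _
    · intro _
      constructor <;> rintro ⟨f, hf, -⟩
      · exact (f 0).elim0
      · exact (f ⟨0, hK⟩).elim0
  rw [g, h]
  simp [sgn]

theorem g_one (n : ℕ) : g 1 (n + 1) = 0 := by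
  classical
  have h : AvSet 1 (n + 1) = ∅ := by
    ext π
    simp only [AvSet, Finset.mem_filter, Finset.mem_univ, true_and, Finset.notMem_empty,
      iff_false, not_and, not_not]
    intro _
    refine ⟨fun _ => 0, ?_, ?_⟩
    · intro a b hab; exact absurd (Subsingleton.elim a b) hab.ne
    · intro i j
      have : i = j := Subsingleton.elim i j
      simp [this]
  rw [g, h, Finset.sum_empty]

/-! ### The decomposition permutation Φ -/

lemma rot_val {N : ℕ} (i : Fin (N+1)) : ((finRotate (N+1)) i).val = (i.val + 1) % (N+1) := by
  rw [finRotate_succ_apply, Fin.add_def]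
  simp [Nat.add_mod]

lemma rotpow_val {N : ℕ} (m : ℕ) (i : Fin (N+1)) :
    (((finRotate (N+1))^m) i).val = (i.val + m) % (N+1) := by
  induction m generalizing i with
  | zero => simp [Nat.mod_eq_of_lt i.isLt]
  | succ m ih =>
      rw [pow_succ, Equiv.Perm.mul_apply, ih, rot_val, Nat.mod_add_mod]
      congr 1
      omega

section Phi
variable {j m n : ℕ}

def Eb (h : j + 1 + m = n + 1) : (Fin j ⊕ (Fin 1 ⊕ Fin m)) ≃ Fin (n+1) :=
  ((Equiv.refl (Fin j)).sumCongr finSumFinEquiv).trans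
    (finSumFinEquiv.trans (finCongr (by omega : j + (1 + m) = n + 1)))

lemma Eb_left (h : j + 1 + m = n + 1) (a : Fin j) : (Eb h (Sum.inl a)).val = a.val := by
  simp [Eb]

lemma Eb_mid (h : j + 1 + m = n + 1) (z : Fin 1) : (Eb h (Sum.inr (Sum.inl z))).val = j := by
  simp [Eb]

lemma Eb_right (h : j + 1 + m = n + 1) (b : Fin m) :
    (Eb h (Sum.inr (Sum.inr b))).val = j + 1 + b.val := by
  simp [Eb]
  omega

def Phi (h : j + 1 + m = n + 1) (α : Perm (Fin j)) (β : Perm (Fin m)) : Perm (Fin (n+1)) :=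
  (finRotate (n+1))^m *
    (Eb h).permCongr (Equiv.Perm.sumCongr α (Equiv.Perm.sumCongr 1 β))

lemma Phi_apply (h : j + 1 + m = n + 1) (α : Perm (Fin j)) (β : Perm (Fin m))
    (y : Fin j ⊕ (Fin 1 ⊕ Fin m)) :
    Phi h α β (Eb h y) =
      ((finRotate (n+1))^m) (Eb h ((Equiv.Perm.sumCongr α (Equiv.Perm.sumCongr 1 β)) y)) := by
  simp only [Phi, Equiv.Perm.mul_apply, Equiv.permCongr_apply, Equiv.symm_apply_apply]

lemma Phi_val_left (h : j + 1 + m = n + 1) (α : Perm (Fin j)) (β : Perm (Fin m))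
    (a : ℕ) (ha : a < j) :
    ((Phi h α β) ⟨a, by omega⟩).val = (α ⟨a, ha⟩).val + m := by
  have e1 : (⟨a, by omega⟩ : Fin (n+1)) = Eb h (Sum.inl ⟨a, ha⟩) := by
    apply Fin.ext; rw [Eb_left]
  rw [e1, Phi_apply, rotpow_val]
  simp only [Equiv.Perm.sumCongr_apply, Sum.map_inl, Eb_left]
  have : (α ⟨a, ha⟩).val < j := (α ⟨a, ha⟩).isLt
  rw [Nat.mod_eq_of_lt (by omega)]

lemma Phi_val_mid (h : j + 1 + m = n + 1) (α : Perm (Fin j)) (β : Perm (Fin m)) :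
    ((Phi h α β) ⟨j, by omega⟩).val = n := by
  have e1 : (⟨j, by omega⟩ : Fin (n+1)) = Eb h (Sum.inr (Sum.inl 0)) := by
    apply Fin.ext; rw [Eb_mid]
  rw [e1, Phi_apply, rotpow_val]
  simp only [Equiv.Perm.sumCongr_apply, Sum.map_inr, Sum.map_inl, id_eq,
    Equiv.Perm.coe_one, Eb_mid]
  rw [Nat.mod_eq_of_lt (by omega)]
  omega

lemma Phi_val_right (h : j + 1 + m = n + 1) (α : Perm (Fin j)) (β : Perm (Fin m))
    (b : ℕ) (hb : b < m) :
    ((Phi h α β) ⟨j + 1 + b, by omega⟩).val = (β ⟨b, hb⟩).val := by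
  have e1 : (⟨j+1+b, by omega⟩ : Fin (n+1)) = Eb h (Sum.inr (Sum.inr ⟨b, hb⟩)) := by
    apply Fin.ext; rw [Eb_right]
  rw [e1, Phi_apply, rotpow_val]
  simp only [Equiv.Perm.sumCongr_apply, Sum.map_inr, Eb_right]
  have hlt : (β ⟨b, hb⟩).val < m := (β ⟨b, hb⟩).isLt
  have e2 : j + 1 + (β ⟨b, hb⟩).val + m = (β ⟨b, hb⟩).val + (n+1) := by omega
  rw [e2, Nat.add_mod_right, Nat.mod_eq_of_lt (by omega)]

lemma Phi_sign (h : j + 1 + m = n + 1) (α : Perm (Fin j)) (β : Perm (Fin m)) :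
    Equiv.Perm.sign (Phi h α β) = (-1)^(n*m) * Equiv.Perm.sign α * Equiv.Perm.sign β := by
  rw [Phi, map_mul, map_pow, sign_finRotate, Equiv.Perm.sign_permCongr,
    Equiv.Perm.sign_sumCongr, Equiv.Perm.sign_sumCongr]
  simp [← pow_mul]
  ring_nf
  rw [mul_assoc]

/-- value lemma phrased for an arbitrary point -/
lemma Phi_val_left' (h : j + 1 + m = n + 1) (α : Perm (Fin j)) (β : Perm (Fin m))
    (x : Fin (n+1)) (hx : x.val < j) :
    ((Phi h α β) x).val = (α ⟨x.val, hx⟩).val + m :=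
  Phi_val_left h α β x.val hx

lemma Phi_val_mid' (h : j + 1 + m = n + 1) (α : Perm (Fin j)) (β : Perm (Fin m))
    (x : Fin (n+1)) (hx : x.val = j) :
    ((Phi h α β) x).val = n := by
  rcases x with ⟨xv, hv⟩
  simp only at hx
  subst hx
  exact Phi_val_mid h α β

lemma Phi_val_right' (h : j + 1 + m = n + 1) (α : Perm (Fin j)) (β : Perm (Fin m))
    (x : Fin (n+1)) (hx : j < x.val) :
    ((Phi h α β) x).val = (β ⟨x.val - (j+1), by omega⟩).val := by
  rcases x with ⟨xv, hv⟩
  simp only at hx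
  obtain ⟨b, rfl⟩ : ∃ b, xv = j + 1 + b := ⟨xv - (j+1), by omega⟩
  have e : (⟨j + 1 + b - (j+1), by omega⟩ : Fin m) = ⟨b, by omega⟩ := by
    apply Fin.ext; simp
  rw [e]
  exact Phi_val_right h α β b (by omega)

end Phi

/-! ### Pattern lemmas -/

lemma hasPatt_trans {n a b : ℕ} {π : Perm (Fin n)} {σ : Perm (Fin a)} {τ : Perm (Fin b)}
    (h1 : HasPatt π σ) (h2 : HasPatt σ τ) : HasPatt π τ := by
  obtain ⟨f, hf, hcf⟩ := h1
  obtain ⟨g, hg, hcg⟩ := h2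
  exact ⟨f ∘ g, hf.comp hg, fun i j => (hcg i j).trans (hcf (g i) (g j))⟩

lemma hasPatt132_iff {n : ℕ} (π : Perm (Fin n)) :
    HasPatt π patt132 ↔ ∃ f : Fin 3 → Fin n, StrictMono f ∧
      (π (f 0)).val < (π (f 2)).val ∧ (π (f 2)).val < (π (f 1)).val := by
  constructor
  · rintro ⟨f, hf, hc⟩
    exact ⟨f, hf, (hc 0 2).mp (by decide), (hc 2 1).mp (by decide)⟩
  · rintro ⟨f, hf, h1, h2⟩
    refine ⟨f, hf, ?_⟩
    have p0 : (patt132 0).val = 0 := by decide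
    have p1 : (patt132 1).val = 2 := by decide
    have p2 : (patt132 2).val = 1 := by decide
    have e0 : (⟨0, by omega⟩ : Fin 3) = 0 := rfl
    have e1 : (⟨1, by omega⟩ : Fin 3) = 1 := rfl
    have e2 : (⟨2, by omega⟩ : Fin 3) = 2 := rfl
    intro i j
    fin_cases i <;> fin_cases j <;>
      simp only [e0, e1, e2, Fin.lt_def, Fin.isValue, p0, p1, p2] <;> omega

lemma hasPatt_one_iff {n K : ℕ} (π : Perm (Fin n)) :
    HasPatt π (1 : Perm (Fin K)) ↔ ∃ f : Fin K → Fin n, StrictMono f ∧ StrictMono (π ∘ f) := by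
  constructor
  · rintro ⟨f, hf, hc⟩
    exact ⟨f, hf, fun i j hij => (hc i j).mp hij⟩
  · rintro ⟨f, hf, hπf⟩
    exact ⟨f, hf, fun i j => ⟨fun hij => hπf hij, fun hij => hπf.lt_iff_lt.mp hij⟩⟩

section Transfer
variable {j m n : ℕ} (h : j + 1 + m = n + 1) (α : Perm (Fin j)) (β : Perm (Fin m))

lemma hasPatt_Phi_left : HasPatt (Phi h α β) α := by
  have va : ∀ a : Fin j, ((Phi h α β) ⟨a.val, by omega⟩).val = (α a).val + m :=
    fun a => Phi_val_left h α β a.val a.isLt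
  refine ⟨fun a => ⟨a.val, by omega⟩, ?_, ?_⟩
  · intro a b hab
    exact hab
  · intro a b
    simp only [Fin.lt_def, va]
    omega

lemma hasPatt_Phi_right : HasPatt (Phi h α β) β := by
  have vb : ∀ b : Fin m, ((Phi h α β) ⟨j + 1 + b.val, by omega⟩).val = (β b).val :=
    fun b => Phi_val_right h α β b.val b.isLt
  refine ⟨fun b => ⟨j + 1 + b.val, by omega⟩, ?_, ?_⟩
  · intro a b hab
    simp only [Fin.lt_def]
    have : a.val < b.val := hab
    omega
  · intro a b
    simp only [Fin.lt_def, vb]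

lemma transfer132 :
    HasPatt (Phi h α β) patt132 ↔ HasPatt α patt132 ∨ HasPatt β patt132 := by
  constructor
  · rw [hasPatt132_iff, hasPatt132_iff (π := α), hasPatt132_iff (π := β)]
    rintro ⟨f, hf, h02, h21⟩
    have hf01 : (f 0).val < (f 1).val := hf (by decide)
    have hf12 : (f 1).val < (f 2).val := hf (by decide)
    have hmn : m ≤ n := by omega
    rcases lt_trichotomy ((f 1).val) j with c1 | c1 | c1
    · -- f 0, f 1 in the left block
      have c0 : (f 0).val < j := by omega
      rcases lt_trichotomy ((f 2).val) j with c2 | c2 | c2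
      · -- all three in the left block
        left
        have hb : ∀ i : Fin 3, (f i).val < j := by
          intro i
          have : f i ≤ f 2 := hf.monotone (by omega)
          have : (f i).val ≤ (f 2).val := this
          omega
        refine ⟨fun i => ⟨(f i).val, hb i⟩, ?_, ?_, ?_⟩
        · intro a b hab
          exact hf hab
        · have v0 := Phi_val_left' h α β (f 0) (hb 0)
          have v2 := Phi_val_left' h α β (f 2) (hb 2)
          simp only [Fin.lt_def]
          omega
        · have v1 := Phi_val_left' h α β (f 1) (hb 1)
          have v2 := Phi_val_left' h α β (f 2) (hb 2)
          simp only [Fin.lt_def]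
          omega
      · -- f 2 is the maximum: contradiction with h21
        exfalso
        have v2 := Phi_val_mid' h α β (f 2) c2
        have : (Phi h α β (f 1)).val < n + 1 := (Phi h α β (f 1)).isLt
        omega
      · -- f 0 left, f 2 right : contradiction with h02
        exfalso
        have v0 := Phi_val_left' h α β (f 0) c0
        have v2 := Phi_val_right' h α β (f 2) c2
        have : ((β ⟨(f 2).val - (j+1), by omega⟩)).val < m := Fin.isLt _
        omega
    · -- f 1 is the maximum position : f 0 left, f 2 right, contradiction with h02
      exfalso
      have c0 : (f 0).val < j := by omega
      have c2 : j < (f 2).val := by omega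
      have v0 := Phi_val_left' h α β (f 0) c0
      have v2 := Phi_val_right' h α β (f 2) c2
      have : ((β ⟨(f 2).val - (j+1), by omega⟩)).val < m := Fin.isLt _
      omega
    · -- f 1 in the right block, so f 2 too
      have c2 : j < (f 2).val := by omega
      rcases lt_trichotomy ((f 0).val) j with c0 | c0 | c0
      · -- f 0 left, f 1 right : value at f 1 < m ≤ value at f 0, contradiction
        exfalso
        have v0 := Phi_val_left' h α β (f 0) c0
        have v1 := Phi_val_right' h α β (f 1) c1
        have : ((β ⟨(f 1).val - (j+1), by omega⟩)).val < m := Fin.isLt _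
        omega
      · -- f 0 is the maximum : contradiction with h02 (values ≤ n)
        exfalso
        have v0 := Phi_val_mid' h α β (f 0) c0
        have : (Phi h α β (f 2)).val < n + 1 := (Phi h α β (f 2)).isLt
        have v2 := Phi_val_right' h α β (f 2) c2
        have : ((β ⟨(f 2).val - (j+1), by omega⟩)).val < m := Fin.isLt _
        omega
      · -- all three in the right block
        right
        have hb : ∀ i : Fin 3, j < (f i).val := by
          intro i
          have : f 0 ≤ f i := hf.monotone (by omega)
          have : (f 0).val ≤ (f i).val := this
          omega
        refine ⟨fun i => ⟨(f i).val - (j+1), by omega⟩, ?_, ?_, ?_⟩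
        · intro a b hab
          have : (f a).val < (f b).val := hf hab
          have ha := hb a
          simp only [Fin.lt_def]
          omega
        · have v0 := Phi_val_right' h α β (f 0) (hb 0)
          have v2 := Phi_val_right' h α β (f 2) (hb 2)
          simp only [Fin.lt_def]
          omega
        · have v1 := Phi_val_right' h α β (f 1) (hb 1)
          have v2 := Phi_val_right' h α β (f 2) (hb 2)
          simp only [Fin.lt_def]
          omega
  · rintro (hα | hβ)
    · exact hasPatt_trans (hasPatt_Phi_left h α β) hα
    · exact hasPatt_trans (hasPatt_Phi_right h α β) hβ

lemma transfer_one (K : ℕ) :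
    HasPatt (Phi h α β) (1 : Perm (Fin (K+1))) ↔
      HasPatt α (1 : Perm (Fin K)) ∨ HasPatt β (1 : Perm (Fin (K+1))) := by
  rw [hasPatt_one_iff, hasPatt_one_iff, hasPatt_one_iff]
  constructor
  · rintro ⟨F, hF, hπF⟩
    by_cases hall : ∀ i, j < (F i).val
    · right
      refine ⟨fun i => ⟨(F i).val - (j+1), by have := (F i).isLt; have := hall i; omega⟩, ?_, ?_⟩
      · intro a b hab
        have : (F a).val < (F b).val := hF hab
        have := hall a
        simp only [Fin.lt_def]
        omega
      · intro a b hab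
        have hv : (Phi h α β (F a)).val < (Phi h α β (F b)).val := hπF hab
        have va := Phi_val_right' h α β (F a) (hall a)
        have vb := Phi_val_right' h α β (F b) (hall b)
        simp only [Function.comp_apply, Fin.lt_def]
        rw [va] at hv
        rw [vb] at hv
        exact hv
    · push_neg at hall
      obtain ⟨i0, hi0⟩ := hall
      have hall2 : ∀ i, (F i).val ≤ j := by
        intro i1
        by_contra hgt
        push_neg at hgt
        have hlt : i0 < i1 := by
          have : F i0 < F i1 := by
            simp only [Fin.lt_def]; omega
          exact hF.lt_iff_lt.mp this
        have hv : (Phi h α β (F i0)).val < (Phi h α β (F i1)).val := hπF hlt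
        have v1 := Phi_val_right' h α β (F i1) hgt
        have hb1 : ((β ⟨(F i1).val - (j+1), by have := (F i1).isLt; omega⟩)).val < m := Fin.isLt _
        rcases lt_or_eq_of_le hi0 with c | c
        · have v0 := Phi_val_left' h α β (F i0) c
          omega
        · have v0 := Phi_val_mid' h α β (F i0) c
          omega
      left
      have hlt : ∀ i : Fin K, (F ⟨i.val, by omega⟩).val < j := by
        intro i
        have h1 : F ⟨i.val, by omega⟩ < F ⟨K, by omega⟩ := hF (by simp [Fin.lt_def])
        have h2 : (F ⟨K, by omega⟩).val ≤ j := hall2 _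
        have : (F ⟨i.val, by omega⟩).val < (F ⟨K, by omega⟩).val := h1
        omega
      refine ⟨fun i => ⟨(F ⟨i.val, by omega⟩).val, hlt i⟩, ?_, ?_⟩
      · intro a b hab
        have : (⟨a.val, by omega⟩ : Fin (K+1)) < ⟨b.val, by omega⟩ := by
          simp only [Fin.lt_def]; exact hab
        exact hF this
      · intro a b hab
        have hab' : (⟨a.val, by omega⟩ : Fin (K+1)) < ⟨b.val, by omega⟩ := by
          simp only [Fin.lt_def]; exact hab
        have hv := hπF hab'
        have va := Phi_val_left' h α β (F ⟨a.val, by omega⟩) (hlt a)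
        have vb := Phi_val_left' h α β (F ⟨b.val, by omega⟩) (hlt b)
        simp only [Function.comp_apply, Fin.lt_def] at hv ⊢
        rw [va, vb] at hv
        omega
  · rintro (⟨f, hf, hαf⟩ | ⟨f, hf, hβf⟩)
    · set F : Fin (K+1) → Fin (n+1) := fun i =>
        if hi : i.val < K then ⟨(f ⟨i.val, hi⟩).val, by have := (f ⟨i.val, hi⟩).isLt; omega⟩
        else ⟨j, by omega⟩ with hFdef
      have hFlt : ∀ (i : Fin (K+1)) (hi : i.val < K),
          F i = ⟨(f ⟨i.val, hi⟩).val, by have := (f ⟨i.val, hi⟩).isLt; omega⟩ := by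
        intro i hi
        simp only [hFdef]
        rw [dif_pos hi]
      have hFK : ∀ (i : Fin (K+1)), ¬ i.val < K → F i = ⟨j, by omega⟩ := by
        intro i hi
        simp only [hFdef]
        rw [dif_neg hi]
      refine ⟨F, ?_, ?_⟩
      · intro a b hab
        have hab' : a.val < b.val := hab
        by_cases hb : b.val < K
        · have ha : a.val < K := by omega
          rw [hFlt a ha, hFlt b hb, Fin.mk_lt_mk]
          exact hf (show (⟨a.val, ha⟩ : Fin K) < ⟨b.val, hb⟩ from hab')
        · have ha : a.val < K := by have := b.isLt; omega
          rw [hFlt a ha, hFK b hb, Fin.mk_lt_mk]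
          exact (f ⟨a.val, ha⟩).isLt
      · intro a b hab
        have hab' : a.val < b.val := hab
        show Phi h α β (F a) < Phi h α β (F b)
        rw [Fin.lt_def]
        by_cases hb : b.val < K
        · have ha : a.val < K := by omega
          have va : (Phi h α β (F a)).val = (α (f ⟨a.val, ha⟩)).val + m := by
            rw [hFlt a ha]
            exact Phi_val_left h α β (f ⟨a.val, ha⟩).val (f ⟨a.val, ha⟩).isLt
          have vb : (Phi h α β (F b)).val = (α (f ⟨b.val, hb⟩)).val + m := by
            rw [hFlt b hb]
            exact Phi_val_left h α β (f ⟨b.val, hb⟩).val (f ⟨b.val, hb⟩).isLt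
          have hmono : (α (f ⟨a.val, ha⟩)).val < (α (f ⟨b.val, hb⟩)).val :=
            hαf (show (⟨a.val, ha⟩ : Fin K) < ⟨b.val, hb⟩ from hab')
          omega
        · have ha : a.val < K := by have := b.isLt; omega
          have va : (Phi h α β (F a)).val = (α (f ⟨a.val, ha⟩)).val + m := by
            rw [hFlt a ha]
            exact Phi_val_left h α β (f ⟨a.val, ha⟩).val (f ⟨a.val, ha⟩).isLt
          have vb : (Phi h α β (F b)).val = n := by
            rw [hFK b hb]
            exact Phi_val_mid h α β
          have : (α (f ⟨a.val, ha⟩)).val < j := Fin.isLt _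
          omega
    · refine ⟨fun i => ⟨j + 1 + (f i).val, by have := (f i).isLt; omega⟩, ?_, ?_⟩
      · intro a b hab
        have : (f a).val < (f b).val := hf hab
        simp only [Fin.lt_def]
        omega
      · intro a b hab
        have va := Phi_val_right h α β (f a).val (f a).isLt
        have vb := Phi_val_right h α β (f b).val (f b).isLt
        simp only [Function.comp_apply, Fin.lt_def]
        rw [va, vb]
        have : (β (f a)).val < (β (f b)).val := hβf hab
        exact this
  end Transfer

/-! ### Injectivity and surjectivity of Φ -/

lemma Phi_inj_j {n j m j' m' : ℕ} (h : j + 1 + m = n + 1) (h' : j' + 1 + m' = n + 1)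
    (α : Perm (Fin j)) (β : Perm (Fin m)) (α' : Perm (Fin j')) (β' : Perm (Fin m'))
    (heq : Phi h α β = Phi h' α' β') : j = j' := by
  rcases lt_trichotomy j j' with c | c | c
  · exfalso
    have v1 : ((Phi h α β) ⟨j, by omega⟩).val = n := Phi_val_mid h α β
    rw [heq] at v1
    have v2 : ((Phi h' α' β') (⟨j, by omega⟩ : Fin (n+1))).val
        = (α' ⟨j, c⟩).val + m' := Phi_val_left' h' α' β' _ c
    have := (α' ⟨j, c⟩).isLt
    omega
  · exact c
  · exfalso
    have v1 : ((Phi h' α' β') ⟨j', by omega⟩).val = n := Phi_val_mid h' α' β'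
    rw [← heq] at v1
    have v2 : ((Phi h α β) (⟨j', by omega⟩ : Fin (n+1))).val
        = (α ⟨j', c⟩).val + m := Phi_val_left' h α β _ c
    have := (α ⟨j', c⟩).isLt
    omega

lemma Phi_inj_ab {n j m : ℕ} (h h2 : j + 1 + m = n + 1)
    (α α' : Perm (Fin j)) (β β' : Perm (Fin m))
    (heq : Phi h α β = Phi h2 α' β') : α = α' ∧ β = β' := by
  constructor
  · apply Equiv.ext
    intro i
    apply Fin.ext
    have va : ((Phi h α β) ⟨i.val, by omega⟩).val = (α i).val + m :=
      Phi_val_left h α β i.val i.isLt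
    have va' : ((Phi h2 α' β') ⟨i.val, by omega⟩).val = (α' i).val + m :=
      Phi_val_left h2 α' β' i.val i.isLt
    rw [heq] at va
    omega
  · apply Equiv.ext
    intro b
    apply Fin.ext
    have vb : ((Phi h α β) ⟨j + 1 + b.val, by omega⟩).val = (β b).val :=
      Phi_val_right h α β b.val b.isLt
    have vb' : ((Phi h2 α' β') ⟨j + 1 + b.val, by omega⟩).val = (β' b).val :=
      Phi_val_right h2 α' β' b.val b.isLt
    rw [heq] at vb
    omega

lemma Phi_surj {n : ℕ} (π : Perm (Fin (n+1))) (hπ : ¬ HasPatt π patt132) :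
    ∃ (j m : ℕ) (h : j + 1 + m = n + 1) (α : Perm (Fin j)) (β : Perm (Fin m)),
      Phi h α β = π := by
  classical
  set top : Fin (n+1) := ⟨n, by omega⟩ with htop
  set p : Fin (n+1) := π.symm top with hp
  have hπp : π p = top := π.apply_symm_apply top
  have h : p.val + 1 + (n - p.val) = n + 1 := by have := p.isLt; omega
  set j := p.val with hj
  set m := n - j with hm
  have key : ∀ a b : Fin (n+1), a < p → p < b → π b < π a := by
    intro a b hap hpb
    by_contra hcon
    push_neg at hcon
    have hab : a < b := lt_trans hap hpb
    have hane : π a ≠ π b := fun e => (ne_of_lt hab) (π.injective e)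
    have halt : π a < π b := lt_of_le_of_ne hcon hane
    apply hπ
    rw [hasPatt132_iff]
    have hbtop : (π b).val < n := by
      have h1 : π b ≠ top := by
        intro e
        rw [← hπp] at e
        exact (ne_of_lt hpb).symm (π.injective e)
      have h2 : (π b).val ≠ n := fun e => h1 (Fin.ext e)
      have := (π b).isLt
      omega
    refine ⟨![a, p, b], ?_, ?_, ?_⟩
    · rw [Fin.strictMono_iff_lt_succ]
      intro i
      fin_cases i <;> simp [hap, hpb]
    · show (π (![a, p, b] 0)).val < (π (![a, p, b] 2)).val
      have e0 : ![a, p, b] 0 = a := rfl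
      have e2 : ![a, p, b] 2 = b := rfl
      rw [e0, e2]
      exact halt
    · show (π (![a, p, b] 2)).val < (π (![a, p, b] 1)).val
      have e1 : ![a, p, b] 1 = p := rfl
      have e2 : ![a, p, b] 2 = b := rfl
      rw [e1, e2, hπp]
      exact hbtop
  have step2 : ∀ b : Fin (n+1), p < b → (π b).val < m := by
    intro b hpb
    have hsub : ∀ v : Fin (n+1), v ∈ Finset.Iio (π b) → π.symm v ∈ (Finset.Ioi p).erase b := by
      intro v hv
      rw [Finset.mem_Iio] at hv
      have hc : π (π.symm v) = v := π.apply_symm_apply v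
      have hcb : π.symm v ≠ b := by
        intro e
        rw [e] at hc
        exact (ne_of_lt hv).symm hc
      have hcp : π.symm v ≠ p := by
        intro e
        rw [e, hπp] at hc
        have hvtop : v < π b := hv
        have : (π b).val < n + 1 := (π b).isLt
        have hπbtop : π b ≤ top := by
          rw [htop]
          exact Fin.le_def.mpr (show (π b).val ≤ n by omega)
        have : v < top := lt_of_lt_of_le hv hπbtop
        exact (ne_of_lt this).symm hc
      have hnotlt : ¬ (π.symm v < p) := by
        intro hlt
        have hk := key _ b hlt hpb
        rw [hc] at hk
        exact absurd hv (asymm hk)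
      have : p < π.symm v := lt_of_le_of_ne (le_of_not_gt hnotlt) (Ne.symm hcp)
      exact Finset.mem_erase.mpr ⟨hcb, Finset.mem_Ioi.mpr this⟩
    have hcard : (Finset.Iio (π b)).card ≤ ((Finset.Ioi p).erase b).card :=
      Finset.card_le_card_of_injOn (fun v => π.symm v) hsub
        (fun x _ y _ e => π.symm.injective e)
    rw [Fin.card_Iio] at hcard
    have h2 : ((Finset.Ioi p).erase b).card = (Finset.Ioi p).card - 1 :=
      Finset.card_erase_of_mem (Finset.mem_Ioi.mpr hpb)
    rw [Fin.card_Ioi] at h2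
    omega
  have step3 : ∀ a : Fin (n+1), a < p → m ≤ (π a).val ∧ (π a).val < n := by
    intro a hap
    constructor
    · have hsub : ∀ c : Fin (n+1), c ∈ Finset.Ioi p → π c ∈ Finset.Iio (π a) := by
        intro c hc
        exact Finset.mem_Iio.mpr (key a c hap (Finset.mem_Ioi.mp hc))
      have hcard : (Finset.Ioi p).card ≤ (Finset.Iio (π a)).card :=
        Finset.card_le_card_of_injOn (fun c => π c) hsub (fun x _ y _ e => π.injective e)
      rw [Fin.card_Ioi, Fin.card_Iio] at hcard
      omega
    · have h1 : π a ≠ top := by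
        intro e
        rw [← hπp] at e
        exact (ne_of_lt hap) (π.injective e)
      have h2 : (π a).val ≠ n := fun e => h1 (Fin.ext e)
      have := (π a).isLt
      omega
  have hαbound : ∀ i : Fin j, (π ⟨i.val, by have := i.isLt; omega⟩).val - m < j := by
    intro i
    have hlt : (⟨i.val, by have := i.isLt; omega⟩ : Fin (n+1)) < p := i.isLt
    have := step3 ⟨i.val, by have := i.isLt; omega⟩ hlt
    omega
  have hαex : ∃ σ : Perm (Fin j), ∀ (x : Fin (n+1)) (hx : x.val < j),
      (σ ⟨x.val, hx⟩).val = (π x).val - m := by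
    have hinj : Function.Injective (fun i : Fin j =>
        (⟨(π ⟨i.val, by have := i.isLt; omega⟩).val - m, hαbound i⟩ : Fin j)) := by
      intro x y e
      have hx : (⟨x.val, by have := x.isLt; omega⟩ : Fin (n+1)) < p := x.isLt
      have hy : (⟨y.val, by have := y.isLt; omega⟩ : Fin (n+1)) < p := y.isLt
      have h3x := step3 ⟨x.val, by have := x.isLt; omega⟩ hx
      have h3y := step3 ⟨y.val, by have := y.isLt; omega⟩ hy
      have e' : (π ⟨x.val, by have := x.isLt; omega⟩).val - m
          = (π ⟨y.val, by have := y.isLt; omega⟩).val - m := congrArg Fin.val e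
      have e'' : (π (⟨x.val, by have := x.isLt; omega⟩ : Fin (n+1))).val
          = (π (⟨y.val, by have := y.isLt; omega⟩ : Fin (n+1))).val := by omega
      have e3 := π.injective (Fin.ext e'')
      have e4 := congrArg Fin.val e3
      exact Fin.ext (show (x : ℕ) = (y : ℕ) from e4)
    exact ⟨Equiv.ofBijective _ (Finite.injective_iff_bijective.mp hinj),
      fun x hx => rfl⟩
  have hβbound : ∀ b : Fin m, (π ⟨j + 1 + b.val, by have := b.isLt; omega⟩).val < m := by
    intro b
    apply step2
    show j < j + 1 + b.val
    omega
  have hβex : ∃ σ : Perm (Fin m), ∀ (x : Fin (n+1)) (hx : j < x.val),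
      (σ ⟨x.val - (j+1), by have := x.isLt; omega⟩).val = (π x).val := by
    have hinj : Function.Injective (fun b : Fin m =>
        (⟨(π ⟨j + 1 + b.val, by have := b.isLt; omega⟩).val, hβbound b⟩ : Fin m)) := by
      intro x y e
      have e0 := congrArg Fin.val e
      have e' : (π (⟨j + 1 + x.val, by have := x.isLt; omega⟩ : Fin (n+1))).val
          = (π (⟨j + 1 + y.val, by have := y.isLt; omega⟩ : Fin (n+1))).val := e0
      have e3 := π.injective (Fin.ext e')
      have e4 := congrArg Fin.val e3
      have e5 : j + 1 + (x : ℕ) = j + 1 + (y : ℕ) := e4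
      exact Fin.ext (by omega)
    refine ⟨Equiv.ofBijective _ (Finite.injective_iff_bijective.mp hinj),
      fun x hx => ?_⟩
    have e : (⟨j + 1 + ((x : ℕ) - (j+1)), by have := x.isLt; omega⟩ : Fin (n+1)) = x :=
      Fin.ext (show j + 1 + ((x : ℕ) - (j+1)) = (x : ℕ) by omega)
    exact congrArg (fun t => (π t).val) e
  obtain ⟨α, hα⟩ := hαex
  obtain ⟨β, hβ⟩ := hβex
  refine ⟨j, m, h, α, β, ?_⟩
  apply Equiv.ext
  intro x
  apply Fin.ext
  rcases lt_trichotomy x.val j with c | c | c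
  · rw [Phi_val_left' h α β x c, hα x c]
    have hs := step3 x (show x < p from c)
    omega
  · rw [Phi_val_mid' h α β x c]
    have e : x = p := Fin.ext c
    rw [e, hπp]
  · rw [Phi_val_right' h α β x c]
    exact hβ x c

/-! ### The recurrence -/

lemma mem_AvSet {K N : ℕ} (π : Perm (Fin N)) :
    π ∈ AvSet K N ↔ ¬ HasPatt π patt132 ∧ ¬ HasPatt π (1 : Perm (Fin K)) := by
  classical
  simp [AvSet, Finset.mem_filter]

lemma sgn_Phi {n j m : ℕ} (h : j + 1 + m = n + 1) (hjm : j + m = n)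
    (α : Perm (Fin j)) (β : Perm (Fin m)) :
    sgn (Phi h α β) = (-1:ℚ)^((j+1)*m) * sgn α * sgn β := by
  have hs := Phi_sign h α β
  have hpar : (-1:ℚ)^(n*m) = (-1:ℚ)^((j+1)*m) := by
    rcases Nat.even_or_odd m with hm | hm
    · rw [Even.neg_one_pow (Nat.even_mul.mpr (Or.inr hm)),
        Even.neg_one_pow (Nat.even_mul.mpr (Or.inr hm))]
    · rcases Nat.even_or_odd j with hj | hj
      · have hn : Odd n := by
          rw [← hjm]; exact hj.add_odd hm
        rw [Odd.neg_one_pow (Nat.odd_mul.mpr ⟨hn, hm⟩),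
          Odd.neg_one_pow (Nat.odd_mul.mpr ⟨hj.add_one, hm⟩)]
      · have hn : Even n := by
          rw [← hjm]; exact hj.add_odd hm
        rw [Even.neg_one_pow (Nat.even_mul.mpr (Or.inl hn)),
          Even.neg_one_pow (Nat.even_mul.mpr (Or.inl (by
            simp [Nat.even_add_one, Nat.not_even_iff_odd.mpr hj])))]
  have hcast : sgn (Phi h α β) = (-1:ℚ)^(n*m) * sgn α * sgn β := by
    rw [sgn, hs]
    push_cast
    simp only [sgn]
    try ring
  rw [hcast, hpar]

theorem g_rec (K n : ℕ) :
    g (K+2) (n+1) = ∑ jm ∈ Finset.HasAntidiagonal.antidiagonal n,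
      (-1:ℚ)^((jm.1+1)*jm.2) * g (K+1) jm.1 * g (K+2) jm.2 := by
  classical
  have hrhs : ∀ jm ∈ Finset.HasAntidiagonal.antidiagonal n,
      (-1:ℚ)^((jm.1+1)*jm.2) * g (K+1) jm.1 * g (K+2) jm.2
      = ∑ p ∈ AvSet (K+1) jm.1 ×ˢ AvSet (K+2) jm.2,
          (-1:ℚ)^((jm.1+1)*jm.2) * sgn p.1 * sgn p.2 := by
    intro jm _
    rw [g, g, mul_assoc, Finset.sum_mul_sum, Finset.mul_sum, Finset.sum_product]
    refine Finset.sum_congr rfl fun α _ => ?_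
    rw [Finset.mul_sum]
    refine Finset.sum_congr rfl fun β _ => ?_
    ring
  rw [Finset.sum_congr rfl hrhs, Finset.sum_sigma']
  rw [g]
  symm
  apply Finset.sum_bij (i := fun (x : Σ _ : ℕ × ℕ, Perm (Fin _) × Perm (Fin _))
    (hx : x ∈ (Finset.HasAntidiagonal.antidiagonal n).sigma
      (fun jm => AvSet (K+1) jm.1 ×ˢ AvSet (K+2) jm.2)) =>
    Phi (show x.1.1 + 1 + x.1.2 = n + 1 by
      rw [Finset.mem_sigma, Finset.HasAntidiagonal.mem_antidiagonal] at hx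
      omega) x.2.1 x.2.2)
  · -- maps into target
    intro a ha
    rw [Finset.mem_sigma, Finset.HasAntidiagonal.mem_antidiagonal, Finset.mem_product] at ha
    obtain ⟨hjm, hα, hβ⟩ := ha
    rw [mem_AvSet] at hα hβ ⊢
    constructor
    · rw [transfer132]
      push_neg
      exact ⟨hα.1, hβ.1⟩
    · rw [transfer_one]
      push_neg
      exact ⟨hα.2, hβ.2⟩
  · -- injectivity
    rintro ⟨⟨j₁, m₁⟩, α₁, β₁⟩ ha₁ ⟨⟨j₂, m₂⟩, α₂, β₂⟩ ha₂ heq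
    rw [Finset.mem_sigma, Finset.HasAntidiagonal.mem_antidiagonal] at ha₁ ha₂
    dsimp only at ha₁ ha₂ heq ⊢
    have hj : j₁ = j₂ := Phi_inj_j _ _ _ _ _ _ heq
    subst hj
    have hm : m₁ = m₂ := by omega
    subst hm
    obtain ⟨eα, eβ⟩ := Phi_inj_ab _ _ _ _ _ _ heq
    rw [eα, eβ]
  · -- surjectivity
    intro π hπ
    rw [mem_AvSet] at hπ
    obtain ⟨j, m, h, α, β, heq⟩ := Phi_surj π hπ.1
    have hjm : j + m = n := by omega
    have hα : α ∈ AvSet (K+1) j := by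
      rw [mem_AvSet]
      constructor
      · intro hc
        exact hπ.1 (by rw [← heq]; exact (transfer132 h α β).mpr (Or.inl hc))
      · intro hc
        exact hπ.2 (by rw [← heq]; exact (transfer_one h α β (K+1)).mpr (Or.inl hc))
    have hβ : β ∈ AvSet (K+2) m := by
      rw [mem_AvSet]
      constructor
      · intro hc
        exact hπ.1 (by rw [← heq]; exact (transfer132 h α β).mpr (Or.inr hc))
      · intro hc
        exact hπ.2 (by rw [← heq]; exact (transfer_one h α β (K+1)).mpr (Or.inr hc))
    refine ⟨⟨(j, m), (α, β)⟩, ?_, ?_⟩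
    · rw [Finset.mem_sigma, Finset.HasAntidiagonal.mem_antidiagonal, Finset.mem_product]
      exact ⟨hjm, hα, hβ⟩
    · exact heq
  · -- values
    rintro ⟨⟨j₁, m₁⟩, α₁, β₁⟩ ha
    rw [Finset.mem_sigma, Finset.HasAntidiagonal.mem_antidiagonal] at ha
    dsimp only at ha ⊢
    exact (sgn_Phi _ ha.1 α₁ β₁).symm

/-! ### Power series layer -/

lemma coeff_Mgf (K n : ℕ) : (PowerSeries.coeff (R := ℚ) n) (Mgf K) = g K n := by
  rw [Mgf, PowerSeries.coeff_mk, g_eq]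

lemma coeff_sub2 (f : PowerSeries ℚ) (n : ℕ) :
    (PowerSeries.coeff (R := ℚ) n) (sub2 f) = if 2 ∣ n then PowerSeries.coeff (R := ℚ) (n / 2) f else 0 := by
  rw [sub2, PowerSeries.coeff_mk]

lemma two_ne_zero_ps : (2 : PowerSeries ℚ) ≠ 0 := by
  intro hh
  have h2 := congrArg (PowerSeries.constantCoeff (R := ℚ)) hh
  rw [show (2 : PowerSeries ℚ) = 1 + 1 by norm_num, map_add, map_one, map_zero] at h2
  norm_num at h2

lemma coeff_two_succ (n : ℕ) : (PowerSeries.coeff (R := ℚ) (n+1)) (2 : PowerSeries ℚ) = 0 := by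
  rw [show (2 : PowerSeries ℚ) = 1 + 1 by norm_num, map_add, PowerSeries.coeff_one]
  simp

lemma coeff_two_zero : (PowerSeries.coeff (R := ℚ) 0) (2 : PowerSeries ℚ) = 2 := by
  rw [show (2 : PowerSeries ℚ) = 1 + 1 by norm_num, map_add, PowerSeries.coeff_one]
  norm_num

noncomputable abbrev evr : PowerSeries ℚ →+* PowerSeries ℚ := PowerSeries.rescale (-1)

lemma coeff_evr (n : ℕ) (f : PowerSeries ℚ) :
    PowerSeries.coeff (R := ℚ) n (evr f) = (-1)^n * PowerSeries.coeff (R := ℚ) n f :=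
  PowerSeries.coeff_rescale f (-1) n

lemma evr_evr (f : PowerSeries ℚ) : evr (evr f) = f := by
  ext n
  rw [coeff_evr, coeff_evr, ← mul_assoc, ← mul_pow]
  simp

lemma evr_X : evr (PowerSeries.X : PowerSeries ℚ) = - PowerSeries.X := by
  ext n
  rw [coeff_evr, PowerSeries.coeff_X, map_neg, PowerSeries.coeff_X]
  rcases eq_or_ne n 1 with h | h <;> simp [h]

lemma evr_sub2 (f : PowerSeries ℚ) : evr (sub2 f) = sub2 f := by
  ext n
  rw [coeff_evr, coeff_sub2]
  by_cases h : 2 ∣ n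
  · rw [if_pos h, Even.neg_one_pow ⟨n/2, by omega⟩, one_mul]
  · rw [if_neg h, mul_zero]

lemma sub2_one : sub2 (1 : PowerSeries ℚ) = 1 := by
  ext n
  rw [coeff_sub2]
  by_cases h2 : 2 ∣ n
  · rw [if_pos h2, PowerSeries.coeff_one, PowerSeries.coeff_one]
    by_cases h0 : n = 0
    · subst h0; norm_num
    · rw [if_neg (by omega : ¬ n / 2 = 0), if_neg h0]
  · rw [if_neg h2, PowerSeries.coeff_one, if_neg (by omega : ¬ n = 0)]

lemma sub2_sub (a b : PowerSeries ℚ) : sub2 (a - b) = sub2 a - sub2 b := by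
  ext n
  rw [map_sub, coeff_sub2, coeff_sub2, coeff_sub2]
  by_cases h : 2 ∣ n
  · rw [if_pos h, if_pos h, if_pos h, map_sub]
  · rw [if_neg h, if_neg h, if_neg h, sub_zero]

lemma sub2_mul (a b : PowerSeries ℚ) : sub2 (a * b) = sub2 a * sub2 b := by
  ext n
  rw [PowerSeries.coeff_mul, coeff_sub2]
  by_cases h : 2 ∣ n
  · obtain ⟨N, rfl⟩ := h
    rw [if_pos ⟨N, rfl⟩, show 2 * N / 2 = N by omega, PowerSeries.coeff_mul]
    rw [← Finset.sum_filter_of_ne (p := fun p : ℕ × ℕ => 2 ∣ p.1)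
      (f := fun p => (PowerSeries.coeff (R := ℚ) p.1) (sub2 a) * (PowerSeries.coeff (R := ℚ) p.2) (sub2 b))
      (by
        intro x hx hne
        by_contra hdvd
        apply hne
        show (PowerSeries.coeff (R := ℚ) x.1) (sub2 a) * (PowerSeries.coeff (R := ℚ) x.2) (sub2 b) = 0
        rw [coeff_sub2, if_neg hdvd, zero_mul])]
    symm
    apply Finset.sum_nbij' (i := fun p : ℕ × ℕ => (p.1 / 2, p.2 / 2))
      (j := fun p : ℕ × ℕ => (2 * p.1, 2 * p.2))
    · rintro ⟨p1, p2⟩ hp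
      rw [Finset.mem_filter, Finset.HasAntidiagonal.mem_antidiagonal] at hp
      rw [Finset.HasAntidiagonal.mem_antidiagonal]
      obtain ⟨hsum, c, hc⟩ := hp
      simp only at hc ⊢
      omega
    · rintro ⟨p1, p2⟩ hp
      rw [Finset.HasAntidiagonal.mem_antidiagonal] at hp
      rw [Finset.mem_filter, Finset.HasAntidiagonal.mem_antidiagonal]
      simp only at hp ⊢
      exact ⟨by omega, ⟨p1, rfl⟩⟩
    · rintro ⟨p1, p2⟩ hp
      rw [Finset.mem_filter, Finset.HasAntidiagonal.mem_antidiagonal] at hp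
      obtain ⟨hsum, c, hc⟩ := hp
      simp only at hc hsum
      have h2 : p2 = 2 * (N - c) := by omega
      simp only [Prod.mk.injEq]
      constructor <;> omega
    · rintro ⟨p1, p2⟩ hp
      rw [Finset.HasAntidiagonal.mem_antidiagonal] at hp
      simp only [Prod.mk.injEq]
      constructor <;> omega
    · rintro ⟨p1, p2⟩ hp
      rw [Finset.mem_filter, Finset.HasAntidiagonal.mem_antidiagonal] at hp
      obtain ⟨hsum, c, hc⟩ := hp
      simp only at hc hsum ⊢
      have h2 : 2 ∣ p2 := ⟨N - c, by omega⟩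
      rw [coeff_sub2, coeff_sub2, if_pos ⟨c, hc⟩, if_pos h2]
  · rw [if_neg h]
    symm
    apply Finset.sum_eq_zero
    intro p hp
    rw [Finset.HasAntidiagonal.mem_antidiagonal] at hp
    by_cases h1 : 2 ∣ p.1
    · have h2 : ¬ 2 ∣ p.2 := by
        obtain ⟨c, hc⟩ := h1
        intro ⟨d, hd⟩
        exact h ⟨c + d, by omega⟩
      rw [coeff_sub2 b, if_neg h2, mul_zero]
    · rw [coeff_sub2 a, if_neg h1, zero_mul]

lemma sub2_X_mul (f : PowerSeries ℚ) :
    sub2 (PowerSeries.X * f) = PowerSeries.X ^ 2 * sub2 f := by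
  have hX2 : (PowerSeries.X : PowerSeries ℚ)^2 * sub2 f
      = PowerSeries.X * (PowerSeries.X * sub2 f) := by ring
  ext n
  rw [coeff_sub2, hX2]
  match n with
  | 0 =>
    rw [if_pos ⟨0, rfl⟩]
    simp
  | 1 =>
    rw [if_neg (by omega)]
    rw [PowerSeries.coeff_succ_X_mul]
    simp
  | (n+2) =>
    rw [PowerSeries.coeff_succ_X_mul, PowerSeries.coeff_succ_X_mul, coeff_sub2]
    by_cases h : 2 ∣ n
    · rw [if_pos (by omega : 2 ∣ n + 2), if_pos h,
        show (n+2)/2 = n/2 + 1 by omega, PowerSeries.coeff_succ_X_mul]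
    · rw [if_neg (by omega : ¬ 2 ∣ n + 2), if_neg h]

lemma sub2_zero : sub2 (0 : PowerSeries ℚ) = 0 := by
  ext n
  rw [coeff_sub2]
  by_cases h : 2 ∣ n <;> simp [h]

/-! ### Functional equation and induction -/

lemma Rps_rel (k : ℕ) : Rps (k+1) * (1 - PowerSeries.X * Rps k) = 1 := by
  have hc : PowerSeries.constantCoeff (R := ℚ) (1 - PowerSeries.X * Rps k) ≠ 0 := by
    rw [map_sub, map_one, map_mul, PowerSeries.constantCoeff_X, zero_mul, sub_zero]
    norm_num
  rw [show Rps (k+1) = (1 - PowerSeries.X * Rps k)⁻¹ from rfl]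
  exact PowerSeries.inv_mul_cancel _ hc

lemma Trel (k : ℕ) :
    sub2 (Rps (k+1)) * (1 - PowerSeries.X^2 * sub2 (Rps k)) = 1 := by
  have h := congrArg sub2 (Rps_rel k)
  rw [sub2_mul, sub2_sub, sub2_one, sub2_X_mul] at h
  exact h

lemma constD (T : PowerSeries ℚ) :
    PowerSeries.constantCoeff (R := ℚ) (1 + PowerSeries.X^2 * T^2) = 1 := by
  rw [map_add, map_one, map_mul, map_pow, PowerSeries.constantCoeff_X]
  ring

lemma Dne (T : PowerSeries ℚ) : (1 + PowerSeries.X^2 * T^2 : PowerSeries ℚ) ≠ 0 := by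
  intro hh
  have h2 := congrArg (PowerSeries.constantCoeff (R := ℚ)) hh
  rw [constD, map_zero] at h2
  norm_num at h2

lemma master (K : ℕ) :
    2 * Mgf (K+2) = 2 + PowerSeries.X *
      ((Mgf (K+1) + evr (Mgf (K+1))) * evr (Mgf (K+2))
        + (Mgf (K+1) - evr (Mgf (K+1))) * Mgf (K+2)) := by
  apply PowerSeries.ext
  intro n
  rw [show (2 : PowerSeries ℚ) * Mgf (K+2) = Mgf (K+2) + Mgf (K+2) from by ring, map_add]
  cases n with
  | zero =>
    have hX : ∀ f : PowerSeries ℚ, (PowerSeries.coeff (R := ℚ) 0) (PowerSeries.X * f) = 0 := by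
      intro f; simp
    rw [map_add, coeff_two_zero, hX, coeff_Mgf, g_zero _ (by omega)]
    norm_num
  | succ n =>
    rw [map_add, coeff_two_succ, PowerSeries.coeff_succ_X_mul, zero_add]
    rw [coeff_Mgf, g_rec K n]
    rw [map_add, PowerSeries.coeff_mul, PowerSeries.coeff_mul, ← Finset.sum_add_distrib,
      ← Finset.sum_add_distrib]
    apply Finset.sum_congr rfl
    rintro ⟨j, m⟩ hjm
    simp only [map_add, map_sub, coeff_evr, coeff_Mgf]
    rcases Nat.even_or_odd j with hj | hj
    · have h1 : (-1:ℚ)^j = 1 := hj.neg_one_pow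
      rcases Nat.even_or_odd m with hm | hm
      · have h2 : (-1:ℚ)^m = 1 := hm.neg_one_pow
        have h3 : (-1:ℚ)^((j+1)*m) = 1 := (Nat.even_mul.mpr (Or.inr hm)).neg_one_pow
        rw [h1, h2, h3]; ring
      · have h2 : (-1:ℚ)^m = -1 := hm.neg_one_pow
        have h3 : (-1:ℚ)^((j+1)*m) = -1 := (Nat.odd_mul.mpr ⟨hj.add_one, hm⟩).neg_one_pow
        rw [h1, h2, h3]; ring
    · have h1 : (-1:ℚ)^j = -1 := hj.neg_one_pow
      have h3 : (-1:ℚ)^((j+1)*m) = 1 := (Nat.even_mul.mpr (Or.inl (by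
        simp [Nat.even_add_one, Nat.not_even_iff_odd.mpr hj]))).neg_one_pow
      rw [h1, h3]; ring

lemma stepA (k' : ℕ) (hM : Mgf (2*k'+1) = 1 + PowerSeries.X * sub2 (Rps k')) :
    Mgf (2*k'+2) * (1 + PowerSeries.X^2 * (sub2 (Rps (k'+1)))^2)
      = (1 + PowerSeries.X * sub2 (Rps (k'+1))) * sub2 (Rps (k'+1)) := by
  have hTS := Trel k'
  have hmaster := master (2*k')
  rw [hM] at hmaster
  have hev1 : evr ((1 : PowerSeries ℚ) + PowerSeries.X * sub2 (Rps k'))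
      = 1 - PowerSeries.X * sub2 (Rps k') := by
    rw [map_add, map_one, map_mul, evr_X, evr_sub2]
    ring
  rw [hev1] at hmaster
  have h1 : Mgf (2*k'+2) = 1 + PowerSeries.X * evr (Mgf (2*k'+2))
      + PowerSeries.X^2 * sub2 (Rps k') * Mgf (2*k'+2) := by
    apply mul_left_cancel₀ two_ne_zero_ps
    linear_combination hmaster
  have h2 : evr (Mgf (2*k'+2)) = 1 - PowerSeries.X * Mgf (2*k'+2)
      + PowerSeries.X^2 * sub2 (Rps k') * evr (Mgf (2*k'+2)) := by
    have h := congrArg evr h1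
    rw [map_add, map_add, map_one, map_mul, map_mul, map_mul, map_pow, evr_X, evr_sub2,
      evr_evr] at h
    linear_combination h
  linear_combination ((sub2 (Rps (k'+1)))^2 * (1 - PowerSeries.X^2 * sub2 (Rps k'))) * h1
    + ((sub2 (Rps (k'+1)))^2 * PowerSeries.X) * h2
    + (sub2 (Rps (k'+1)) - Mgf (2*k'+2) *
        ((1 - PowerSeries.X^2 * sub2 (Rps k')) * sub2 (Rps (k'+1)) + 1)) * hTS

lemma stepA' (k' : ℕ) (hM : Mgf (2*k'+1) = 1 + PowerSeries.X * sub2 (Rps k')) :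
    Mgf (2*k'+2) = (1 + PowerSeries.X * sub2 (Rps (k'+1))) * sub2 (Rps (k'+1)) *
      (1 + PowerSeries.X^2 * (sub2 (Rps (k'+1)))^2)⁻¹ := by
  have h := stepA k' hM
  have hD := PowerSeries.mul_inv_cancel _ (by
    rw [constD]; norm_num :
    PowerSeries.constantCoeff (R := ℚ) (1 + PowerSeries.X^2 * (sub2 (Rps (k'+1)))^2) ≠ 0)
  calc Mgf (2*k'+2)
      = Mgf (2*k'+2) * ((1 + PowerSeries.X^2 * (sub2 (Rps (k'+1)))^2) *
        (1 + PowerSeries.X^2 * (sub2 (Rps (k'+1)))^2)⁻¹) := by rw [hD, mul_one]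
    _ = (Mgf (2*k'+2) * (1 + PowerSeries.X^2 * (sub2 (Rps (k'+1)))^2)) *
        (1 + PowerSeries.X^2 * (sub2 (Rps (k'+1)))^2)⁻¹ := by ring
    _ = (1 + PowerSeries.X * sub2 (Rps (k'+1))) * sub2 (Rps (k'+1)) *
        (1 + PowerSeries.X^2 * (sub2 (Rps (k'+1)))^2)⁻¹ := by rw [h]

lemma stepB (k' : ℕ)
    (hMD : Mgf (2*k'+2) * (1 + PowerSeries.X^2 * (sub2 (Rps (k'+1)))^2)
      = (1 + PowerSeries.X * sub2 (Rps (k'+1))) * sub2 (Rps (k'+1))) :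
    Mgf (2*k'+3) = 1 + PowerSeries.X * sub2 (Rps (k'+1)) := by
  have hm := master (2*k'+1)
  have hevMD : evr (Mgf (2*k'+2)) * (1 + PowerSeries.X^2 * (sub2 (Rps (k'+1)))^2)
      = (1 - PowerSeries.X * sub2 (Rps (k'+1))) * sub2 (Rps (k'+1)) := by
    have h := congrArg evr hMD
    rw [map_mul, map_mul, map_add, map_add, map_one, map_mul, map_mul, map_pow, map_pow,
      evr_X, evr_sub2] at h
    linear_combination h
  have h1 : Mgf (2*k'+3) = (1 + PowerSeries.X^2 * (sub2 (Rps (k'+1)))^2)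
      + PowerSeries.X * sub2 (Rps (k'+1)) * evr (Mgf (2*k'+3)) := by
    apply mul_left_cancel₀ two_ne_zero_ps
    linear_combination (1 + PowerSeries.X^2 * (sub2 (Rps (k'+1)))^2) * hm
      + (PowerSeries.X * evr (Mgf (2*k'+3))) * (hMD + hevMD)
      + (PowerSeries.X * Mgf (2*k'+3)) * (hMD - hevMD)
  have h2 : evr (Mgf (2*k'+3)) = (1 + PowerSeries.X^2 * (sub2 (Rps (k'+1)))^2)
      - PowerSeries.X * sub2 (Rps (k'+1)) * Mgf (2*k'+3) := by
    have h := congrArg evr h1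
    rw [map_add, map_add, map_one, map_mul, map_mul, map_mul, map_pow, map_pow,
      evr_X, evr_sub2, evr_evr] at h
    linear_combination h
  have h3 : Mgf (2*k'+3) * (1 + PowerSeries.X^2 * (sub2 (Rps (k'+1)))^2)
      = (1 + PowerSeries.X * sub2 (Rps (k'+1))) *
        (1 + PowerSeries.X^2 * (sub2 (Rps (k'+1)))^2) := by
    linear_combination h1 + (PowerSeries.X * sub2 (Rps (k'+1))) * h2
  exact mul_right_cancel₀ (Dne _) h3

lemma Mgf_one : Mgf 1 = 1 := by
  apply PowerSeries.ext
  intro n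
  rw [coeff_Mgf, PowerSeries.coeff_one]
  cases n with
  | zero => rw [if_pos rfl]; exact g_zero 1 le_rfl
  | succ n => rw [if_neg (by omega)]; exact g_one n

lemma oddForm : ∀ k', Mgf (2*k'+1) = 1 + PowerSeries.X * sub2 (Rps k') := by
  intro k'
  induction k' with
  | zero =>
    rw [show 2*0+1 = 1 from rfl, Mgf_one, show Rps 0 = 0 from rfl, sub2_zero]
    ring
  | succ k ih =>
    have hB := stepB k (stepA k ih)
    rw [show 2*(k+1)+1 = 2*k+3 from by ring]
    exact hB

theorem Mgf_increasing' (k : ℕ) (hk : 1 ≤ k) :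
    Mgf (2 * k - 1) = 1 + PowerSeries.X * sub2 (Rps (k - 1)) ∧
    Mgf (2 * k) =
      (1 + PowerSeries.X * sub2 (Rps k)) * sub2 (Rps k) *
        (1 + PowerSeries.X ^ 2 * (sub2 (Rps k)) ^ 2)⁻¹ := by
  obtain ⟨k', rfl⟩ : ∃ k', k = k' + 1 := ⟨k - 1, by omega⟩
  constructor
  · rw [show 2 * (k'+1) - 1 = 2*k'+1 from by omega, show k'+1-1 = k' from rfl]
    exact oddForm k'
  · rw [show 2 * (k'+1) = 2*k'+2 from by ring]
    exact stepA' k' (oddForm k')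

/-- For all `k ≥ 1`, `M_{2k−1}(x) = 1 + x·R_{k−1}(x²)` and
`M_{2k}(x) = (1 + x·R_k(x²))·R_k(x²)/(1 + x²·R_k(x²)²)`. -/
theorem Mgf_increasing (k : ℕ) (hk : 1 ≤ k) :
    Mgf (2 * k - 1) = 1 + PowerSeries.X * sub2 (Rps (k - 1)) ∧
    Mgf (2 * k) =
      (1 + PowerSeries.X * sub2 (Rps k)) * sub2 (Rps k) *
        (1 + PowerSeries.X ^ 2 * (sub2 (Rps k)) ^ 2)⁻¹ := by
  exact Mgf_increasing' k hk
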